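/- Let G be a finite group and k a commutative ring. The crossed Burnside algebra xB_k(G) — the free k-module on G-conjugacy classes of pairs (H, a) with H ≤ G a subgroup and a ∈ C_G(H) an element of its centralizer, with multiplication on basis elements given by (K, b)·(H, a) = Σ_{[g] ∈ K\G/H} (K ∩ gHg⁻¹, b·gag⁻¹) — is a well-defined associative, commutative, unital k-algebra with unit the class of (G, e). -/

import Mathlib

namespace CrossedBurnside

variable {G : Type} [Group G]

/-- Pairs `(H, a)` with `H ≤ G` and `a ∈ C_G(H)`. -/
def CPair (G : Type) [Group G] : Type :=
  {p : Subgroup G × G // p.2 ∈ Subgroup.centralizer (p.1 : Set G)}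

/-- Simultaneous conjugation relation on pairs: `(H,a) ~ (xHx⁻¹, xax⁻¹)`. -/
def conjRel (p q : CPair G) : Prop :=
  ∃ x : G, Subgroup.map (MulAut.conj x).toMonoidHom p.1.1 = q.1.1 ∧
    x * p.1.2 * x⁻¹ = q.1.2

/-- The underlying `k`-module of the crossed Burnside algebra: the free `k`-module
on `G`-conjugacy classes of pairs `(H, a)` with `a ∈ C_G(H)`. -/
abbrev XB (k G : Type) [CommRing k] [Group G] : Type :=
  Quot (conjRel (G := G)) →₀ k

theorem centralizer_aux {K H : Subgroup G} {b a g : G}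
    (hb : b ∈ Subgroup.centralizer (K : Set G))
    (ha : a ∈ Subgroup.centralizer (H : Set G)) :
    b * (g * a * g⁻¹) ∈
      Subgroup.centralizer
        ((K ⊓ Subgroup.map (MulAut.conj g).toMonoidHom H : Subgroup G) : Set G) := by
  intro u hu
  obtain ⟨huK, huH⟩ := hu
  obtain ⟨h, hh, he⟩ := huH
  have h1 : u * b = b * u := hb u huK
  have h2 : h * a = a * h := ha h hh
  have hu' : u = g * h * g⁻¹ := by simpa [MulAut.conj] using he.symm
  have h3 : u * (g * a * g⁻¹) = (g * a * g⁻¹) * u := by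
    rw [hu']
    calc g * h * g⁻¹ * (g * a * g⁻¹) = g * (h * a) * g⁻¹ := by group
    _ = g * (a * h) * g⁻¹ := by rw [h2]
    _ = g * a * g⁻¹ * (g * h * g⁻¹) := by group
  rw [← mul_assoc, h1, mul_assoc, h3, ← mul_assoc]

theorem one_mem_centralizer_top :
    (1 : G) ∈ Subgroup.centralizer ((⊤ : Subgroup G) : Set G) := by
  intro u _; simp


variable {k : Type} [CommRing k]

/-- The basis element of `XB k G` given by a pair `(H, a)` with `a ∈ C_G(H)`. -/
noncomputable def basisElt (k : Type) [CommRing k] (H : Subgroup G) (a : G)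
    (ha : a ∈ Subgroup.centralizer (H : Set G)) : XB k G :=
  Finsupp.single (Quot.mk (conjRel (G := G)) ⟨(H, a), ha⟩) 1

/-- `mul` realizes the crossed Burnside multiplication: for all pairs `(K, b)`,
`(H, a)` and every set `R` of representatives of the double cosets `K\G/H`,
`(K, b) · (H, a) = Σ_{g ∈ R} (K ∩ gHg⁻¹, b·gag⁻¹)`. -/
def IsXBMul (mul : XB k G →ₗ[k] XB k G →ₗ[k] XB k G) : Prop :=
  ∀ (K H : Subgroup G) (b a : G)
    (hb : b ∈ Subgroup.centralizer (K : Set G))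
    (ha : a ∈ Subgroup.centralizer (H : Set G))
    (R : Finset G),
    (∀ x : G, ∃! r, r ∈ R ∧ x ∈ DoubleCoset.doubleCoset r (K : Set G) (H : Set G)) →
    mul (basisElt k K b hb) (basisElt k H a ha) =
      ∑ g ∈ R,
        basisElt k (K ⊓ Subgroup.map (MulAut.conj g).toMonoidHom H)
          (b * (g * a * g⁻¹)) (centralizer_aux hb ha)

open MulAction

section Phi

variable (X : Type) [MulAction G X]

/-- An equivariant weight function. -/
def IsWeight (w : X → G) : Prop := ∀ (g : G) (x : X), w (g • x) = g * w x * g⁻¹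

variable {X}

theorem weight_mem_centralizer {w : X → G} (hw : IsWeight X w) (x : X) :
    w x ∈ Subgroup.centralizer ((stabilizer G x : Subgroup G) : Set G) := by
  intro u hu
  have h1 : w (u • x) = u * w x * u⁻¹ := hw u x
  rw [mem_stabilizer_iff.mp hu] at h1
  have h2 : w x * u = u * w x := by
    conv_lhs => rw [h1]
    group
  exact h2.symm

/-- The class of the pair (stabilizer, weight) of a point. -/
noncomputable def pt {w : X → G} (hw : IsWeight X w) (x : X) : Quot (conjRel (G := G)) :=
  Quot.mk _ ⟨(stabilizer G x, w x), weight_mem_centralizer hw x⟩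

theorem pt_smul {w : X → G} (hw : IsWeight X w) (g : G) (x : X) :
    pt hw (g • x) = pt hw x := by
  refine (Quot.sound ⟨g, ?_, ?_⟩).symm
  · exact (stabilizer_smul_eq_stabilizer_map_conj g x).symm
  · exact (hw g x).symm

theorem pt_orbitRel {w : X → G} (hw : IsWeight X w) :
    ∀ a b : X, (MulAction.orbitRel G X).r a b → pt hw a = pt hw b := by
  intro a b h
  obtain ⟨g, hg⟩ := MulAction.mem_orbit_iff.mp h
  rw [← hg, pt_smul]

noncomputable instance fintypeOrbitQuot (X : Type) [MulAction G X] [Finite X] :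
    Fintype (Quotient (MulAction.orbitRel G X)) := Fintype.ofFinite _

variable (k)

/-- The element of `XB k G` attached to a finite crossed `G`-set. -/
noncomputable def Phi [Finite X] {w : X → G} (hw : IsWeight X w) : XB k G :=
  ∑ o : Quotient (MulAction.orbitRel G X),
    Finsupp.single (Quotient.liftOn' o (pt hw) (pt_orbitRel hw)) (1 : k)

theorem Phi_eq_sum [Finite X] {w : X → G} (hw : IsWeight X w) {I : Type}
    (RR : Finset I) (f : I → X)
    (hf : ∀ p : X, ∃! i, i ∈ RR ∧ p ∈ orbit G (f i)) :
    Phi k hw = ∑ i ∈ RR, Finsupp.single (pt hw (f i)) (1 : k) := by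
  rw [Phi]
  refine (Finset.sum_nbij (fun i => Quotient.mk'' (f i)) (fun i _ => Finset.mem_univ _)
    ?_ ?_ ?_).symm
  · intro i hi j hj hij
    have h1 : f i ∈ orbit G (f j) := Quotient.eq''.mp hij
    obtain ⟨r, _, hr⟩ := hf (f i)
    exact (hr i ⟨hi, mem_orbit_self _⟩).trans (hr j ⟨hj, h1⟩).symm
  · intro o ho
    induction o using Quotient.inductionOn' with
    | h x =>
      obtain ⟨i, ⟨hi, hx⟩, _⟩ := hf x
      exact ⟨i, hi, Quotient.sound' (Setoid.symm' _ hx)⟩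
  · intro i _
    rw [Quotient.liftOn'_mk'']

/-- Invariance of `Phi` under pointwise class-preserving equivariant bijections. -/
theorem Phi_congr {Y : Type} [MulAction G Y] [Finite X] [Finite Y]
    {w : X → G} (hw : IsWeight X w) {v : Y → G} (hv : IsWeight Y v)
    (e : X ≃ Y) (he : ∀ (g : G) (x : X), e (g • x) = g • e x)
    (hpt : ∀ x : X, pt hv (e x) = pt hw x) :
    Phi k hw = Phi k hv := by
  have hrel : ∀ a b : X, (MulAction.orbitRel G X).r a b →
      (MulAction.orbitRel G Y).r (e a) (e b) := by
    intro a b h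
    obtain ⟨g, hg⟩ := MulAction.mem_orbit_iff.mp h
    exact MulAction.mem_orbit_iff.mpr ⟨g, by rw [← he, hg]⟩
  have hrel' : ∀ a b : Y, (MulAction.orbitRel G Y).r a b →
      (MulAction.orbitRel G X).r (e.symm a) (e.symm b) := by
    intro a b h
    obtain ⟨g, hg⟩ := MulAction.mem_orbit_iff.mp h
    refine MulAction.mem_orbit_iff.mpr ⟨g, e.injective ?_⟩
    rw [he, e.apply_symm_apply, e.apply_symm_apply, hg]
  rw [Phi, Phi]
  refine Finset.sum_nbij' (Quotient.map' e hrel) (Quotient.map' e.symm hrel')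
    (fun o _ => Finset.mem_univ _) (fun o _ => Finset.mem_univ _) ?_ ?_ ?_
  · intro o _
    induction o using Quotient.inductionOn' with
    | h x => rw [Quotient.map'_mk'', Quotient.map'_mk'', e.symm_apply_apply]
  · intro o _
    induction o using Quotient.inductionOn' with
    | h y => rw [Quotient.map'_mk'', Quotient.map'_mk'', e.apply_symm_apply]
  · intro o _
    induction o using Quotient.inductionOn' with
    | h x =>
      rw [Quotient.map'_mk'', Quotient.liftOn'_mk'', Quotient.liftOn'_mk'', hpt]

theorem stabilizer_equiv_eq {Y : Type} [MulAction G Y]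
    (e : X ≃ Y) (he : ∀ (g : G) (x : X), e (g • x) = g • e x) (x : X) :
    stabilizer G (e x) = stabilizer G x := by
  ext g
  rw [mem_stabilizer_iff, mem_stabilizer_iff, ← he, e.apply_eq_iff_eq]

theorem pt_congr_eq {Y : Type} [MulAction G Y] {w : X → G} (hw : IsWeight X w)
    {v : Y → G} (hv : IsWeight Y v) {x : X} {y : Y}
    (h1 : stabilizer G y = stabilizer G x) (h2 : v y = w x) :
    pt hv y = pt hw x :=
  congrArg (Quot.mk _) (Subtype.ext (Prod.ext h1 h2))

theorem map_conj_eq_of_centralizer {S : Subgroup G} {t : G}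
    (ht : t ∈ Subgroup.centralizer (S : Set G)) :
    S.map (MulAut.conj t).toMonoidHom = S := by
  ext s
  simp only [Subgroup.mem_map, MulEquiv.coe_toMonoidHom, MulAut.conj_apply]
  constructor
  · rintro ⟨u, hu, rfl⟩
    have := ht u hu
    have h2 : t * u * t⁻¹ = u := by rw [← this]; group
    rw [h2]; exact hu
  · intro hs
    exact ⟨s, hs, by have := ht s hs; rw [← this]; group⟩

theorem pt_congr_conj {Y : Type} [MulAction G Y] {w : X → G} (hw : IsWeight X w)
    {v : Y → G} (hv : IsWeight Y v) {x : X} {y : Y} (t : G)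
    (h1 : stabilizer G y = stabilizer G x)
    (ht : t ∈ Subgroup.centralizer ((stabilizer G x : Subgroup G) : Set G))
    (h2 : t * w x * t⁻¹ = v y) :
    pt hv y = pt hw x := by
  refine (Quot.sound ⟨t, ?_, h2⟩).symm
  show Subgroup.map (MulAut.conj t).toMonoidHom (stabilizer G x) = stabilizer G y
  rw [map_conj_eq_of_centralizer ht, h1]

end Phi


section Cosets

theorem stabilizer_coset (K : Subgroup G) (g : G) :
    stabilizer G ((g : G ⧸ K)) = K.map (MulAut.conj g).toMonoidHom := by
  have h : ((g : G ⧸ K)) = g • ((1:G) : G ⧸ K) := by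
    rw [MulAction.Quotient.smul_coe]
    simp
  rw [h, stabilizer_smul_eq_stabilizer_map_conj, MulAction.stabilizer_quotient]

/-- The weight function on a coset space `G ⧸ K` attached to `b ∈ C_G(K)`. -/
def cw (K : Subgroup G) (c : G) (hc : c ∈ Subgroup.centralizer (K : Set G)) : G ⧸ K → G :=
  fun q => Quotient.liftOn' q (fun g => g * c * g⁻¹) (by
    intro a b h
    have hl : a⁻¹ * b ∈ K := QuotientGroup.leftRel_apply.mp h
    have hcl : (a⁻¹ * b) * c = c * (a⁻¹ * b) := hc _ hl
    show a * c * a⁻¹ = b * c * b⁻¹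
    calc a * c * a⁻¹ = a * (c * (a⁻¹ * b)) * b⁻¹ := by group
    _ = a * ((a⁻¹ * b) * c) * b⁻¹ := by rw [hcl]
    _ = b * c * b⁻¹ := by group)

theorem cw_coe (K : Subgroup G) (c : G) (hc) (g : G) :
    cw K c hc (g : G ⧸ K) = g * c * g⁻¹ := rfl

theorem cw_weight (K : Subgroup G) (c : G) (hc : c ∈ Subgroup.centralizer (K : Set G)) :
    IsWeight (G ⧸ K) (cw K c hc) := by
  intro g q
  induction q using Quotient.inductionOn' with
  | h a =>
    show (g * a) * c * (g * a)⁻¹ = g * (a * c * a⁻¹) * g⁻¹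
    group

/-- Product weight. -/
def wprod {X Y : Type} (w : X → G) (v : Y → G) : X × Y → G := fun p => w p.1 * v p.2

theorem wprod_weight {X Y : Type} [MulAction G X] [MulAction G Y] {w : X → G} {v : Y → G}
    (hw : IsWeight X w) (hv : IsWeight Y v) : IsWeight (X × Y) (wprod w v) := by
  rintro g ⟨x, y⟩
  show w (g • x) * v (g • y) = g * (w x * v y) * g⁻¹
  rw [hw, hv]; group

theorem stabilizer_prod {X Y : Type} [MulAction G X] [MulAction G Y] (x : X) (y : Y) :
    stabilizer G ((x, y) : X × Y) = stabilizer G x ⊓ stabilizer G y := by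
  ext g
  simp [mem_stabilizer_iff, Subgroup.mem_inf, Prod.ext_iff, Prod.smul_def]

/-- Translation isomorphism `G⧸K ≃ G⧸xKx⁻¹`. -/
def shiftEquiv (K : Subgroup G) (x : G) :
    G ⧸ K ≃ G ⧸ (K.map (MulAut.conj x).toMonoidHom) where
  toFun := Quotient.map' (fun g => g * x⁻¹) (by
    intro a b h
    refine QuotientGroup.leftRel_apply.mpr ?_
    refine Subgroup.mem_map.mpr ⟨a⁻¹ * b, QuotientGroup.leftRel_apply.mp h, ?_⟩
    show x * (a⁻¹ * b) * x⁻¹ = (a * x⁻¹)⁻¹ * (b * x⁻¹)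
    group)
  invFun := Quotient.map' (fun g => g * x) (by
    intro a b h
    refine QuotientGroup.leftRel_apply.mpr ?_
    obtain ⟨y, hy, he⟩ := Subgroup.mem_map.mp (QuotientGroup.leftRel_apply.mp h)
    have he' : x * y * x⁻¹ = a⁻¹ * b := he
    have : (a * x)⁻¹ * (b * x) = y := by
      rw [show (a * x)⁻¹ * (b * x) = x⁻¹ * (a⁻¹ * b) * x by group, ← he']
      group
    rw [this]; exact hy)
  left_inv := by
    intro q
    induction q using Quotient.inductionOn' with
    | h a =>
      rw [Quotient.map'_mk'', Quotient.map'_mk'']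
      exact congrArg _ (by group)
  right_inv := by
    intro q
    induction q using Quotient.inductionOn' with
    | h a =>
      rw [Quotient.map'_mk'', Quotient.map'_mk'']
      exact congrArg _ (by group)

theorem shiftEquiv_smul (K : Subgroup G) (x g : G) (q : G ⧸ K) :
    shiftEquiv K x (g • q) = g • shiftEquiv K x q := by
  induction q using Quotient.inductionOn' with
  | h a =>
    show (Quotient.mk'' (g * a * x⁻¹) : G ⧸ K.map (MulAut.conj x).toMonoidHom) =
      (Quotient.mk'' (g * (a * x⁻¹)) : G ⧸ K.map (MulAut.conj x).toMonoidHom)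
    exact congrArg _ (by group)

theorem cw_shift (K : Subgroup G) (b x : G) (hb : b ∈ Subgroup.centralizer (K : Set G))
    (hb' : x * b * x⁻¹ ∈ Subgroup.centralizer ((K.map (MulAut.conj x).toMonoidHom : Subgroup G) : Set G))
    (q : G ⧸ K) :
    cw _ (x * b * x⁻¹) hb' (shiftEquiv K x q) = cw K b hb q := by
  induction q using Quotient.inductionOn' with
  | h a =>
    show (a * x⁻¹) * (x * b * x⁻¹) * (a * x⁻¹)⁻¹ = a * b * a⁻¹
    group

end Cosets


section Master

variable (k)

theorem basisElt_congr {S S' : Subgroup G} {w w' : G} (hS : S = S') (hw : w = w')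
    (h : w ∈ Subgroup.centralizer (S : Set G)) (h' : w' ∈ Subgroup.centralizer (S' : Set G)) :
    basisElt k S w h = basisElt k S' w' h' := by
  subst hS; subst hw; rfl

theorem pt_prod_coset {X : Type} [MulAction G X] {w : X → G} (hw : IsWeight X w)
    (L : Subgroup G) (c : G) (hc : c ∈ Subgroup.centralizer (L : Set G)) (x : X) (g : G) :
    pt (wprod_weight hw (cw_weight L c hc)) ((x, (g : G ⧸ L)) : X × G ⧸ L) =
      Quot.mk (conjRel (G := G))
        ⟨(stabilizer G x ⊓ L.map (MulAut.conj g).toMonoidHom, w x * (g * c * g⁻¹)),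
          centralizer_aux (weight_mem_centralizer hw x) hc⟩ := by
  refine congrArg (Quot.mk _) (Subtype.ext (Prod.ext ?_ ?_))
  · show stabilizer G ((x, (g : G ⧸ L)) : X × G ⧸ L) =
      stabilizer G x ⊓ L.map (MulAut.conj g).toMonoidHom
    rw [stabilizer_prod, stabilizer_coset]
  · rfl

theorem Phi_prod_coset_eq_sum [Finite G] {X : Type} [MulAction G X] [Finite X]
    {w : X → G} (hw : IsWeight X w) (L : Subgroup G) (c : G)
    (hc : c ∈ Subgroup.centralizer (L : Set G))
    {I : Type} (RR : Finset I) (x₀ : I → X) (gg : I → G)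
    (hrep : ∀ p : X × G ⧸ L, ∃! i, i ∈ RR ∧
      p ∈ orbit G ((x₀ i, ((gg i : G) : G ⧸ L)) : X × G ⧸ L)) :
    Phi k (wprod_weight hw (cw_weight L c hc)) =
      ∑ i ∈ RR, basisElt k (stabilizer G (x₀ i) ⊓ L.map (MulAut.conj (gg i)).toMonoidHom)
        (w (x₀ i) * (gg i * c * (gg i)⁻¹))
        (centralizer_aux (weight_mem_centralizer hw (x₀ i)) hc) := by
  rw [Phi_eq_sum k _ RR (fun i => (x₀ i, ((gg i : G) : G ⧸ L))) hrep]
  refine Finset.sum_congr rfl fun i _ => ?_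
  rw [pt_prod_coset hw]
  rfl

theorem orbit_cond_pair (K H : Subgroup G) (R : Finset G)
    (hR : ∀ x : G, ∃! r, r ∈ R ∧ x ∈ DoubleCoset.doubleCoset r (K : Set G) (H : Set G)) :
    ∀ p : (G ⧸ K) × (G ⧸ H), ∃! g, g ∈ R ∧
      p ∈ orbit G (((((1:G)) : G ⧸ K), ((g : G) : G ⧸ H)) : (G ⧸ K) × (G ⧸ H)) := by
  rintro ⟨py, pz⟩
  induction py using Quotient.inductionOn' with
  | h y =>
  induction pz using Quotient.inductionOn' with
  | h z =>
    have key : ∀ g : G,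
        ((Quotient.mk'' y, Quotient.mk'' z) : (G ⧸ K) × (G ⧸ H)) ∈
          orbit G (((((1:G)) : G ⧸ K), ((g : G) : G ⧸ H)) : (G ⧸ K) × (G ⧸ H)) ↔
        y⁻¹ * z ∈ DoubleCoset.doubleCoset g (K : Set G) (H : Set G) := by
      intro g
      constructor
      · intro horb
        obtain ⟨u, hu⟩ := MulAction.mem_orbit_iff.mp horb
        have h1 : (↑(u * 1) : G ⧸ K) = ↑y := congrArg Prod.fst hu
        have h2 : (↑(u * g) : G ⧸ H) = ↑z := congrArg Prod.snd hu
        have hk : (u * 1)⁻¹ * y ∈ K := QuotientGroup.eq.mp h1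
        have hh : (u * g)⁻¹ * z ∈ H := QuotientGroup.eq.mp h2
        have hk' : y⁻¹ * u ∈ K := by
          have h3 := K.inv_mem hk
          have h4 : ((u * 1)⁻¹ * y)⁻¹ = y⁻¹ * u := by group
          rwa [h4] at h3
        exact DoubleCoset.mem_doubleCoset.mpr ⟨y⁻¹ * u, hk', (u * g)⁻¹ * z, hh, by group⟩
      · intro hd
        obtain ⟨kk, hkk, hh, hhh, heq⟩ := DoubleCoset.mem_doubleCoset.mp hd
        refine MulAction.mem_orbit_iff.mpr ⟨y * kk, ?_⟩
        have e1 : (↑((y * kk) * 1) : G ⧸ K) = ↑y := by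
          refine QuotientGroup.eq.mpr ?_
          have h5 : ((y * kk) * 1)⁻¹ * y = kk⁻¹ := by group
          rw [h5]; exact K.inv_mem hkk
        have e2 : (↑((y * kk) * g) : G ⧸ H) = ↑z := by
          refine QuotientGroup.eq.mpr ?_
          have h6 : ((y * kk) * g)⁻¹ * z = g⁻¹ * kk⁻¹ * (y⁻¹ * z) := by group
          have h7 : ((y * kk) * g)⁻¹ * z = hh := by
            rw [h6, heq]; group
          rw [h7]; exact hhh
        exact Prod.ext e1 e2
    obtain ⟨r, ⟨hr1, hr2⟩, hr3⟩ := hR (y⁻¹ * z)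
    exact ⟨r, ⟨hr1, (key r).mpr hr2⟩, fun g hg => hr3 g ⟨hg.1, (key g).mp hg.2⟩⟩

theorem PhiPair_eq_sum [Finite G] (K H : Subgroup G) (b a : G)
    (hb : b ∈ Subgroup.centralizer (K : Set G)) (ha : a ∈ Subgroup.centralizer (H : Set G))
    (R : Finset G)
    (hR : ∀ x : G, ∃! r, r ∈ R ∧ x ∈ DoubleCoset.doubleCoset r (K : Set G) (H : Set G)) :
    Phi k (wprod_weight (cw_weight K b hb) (cw_weight H a ha)) =
      ∑ g ∈ R, basisElt k (K ⊓ H.map (MulAut.conj g).toMonoidHom) (b * (g * a * g⁻¹))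
        (centralizer_aux hb ha) := by
  rw [Phi_prod_coset_eq_sum k (cw_weight K b hb) H a ha R (fun _ => ((1:G) : G ⧸ K))
    (fun g => g) (orbit_cond_pair K H R hR)]
  refine Finset.sum_congr rfl fun g _ => ?_
  refine basisElt_congr k ?_ ?_ _ _
  · rw [MulAction.stabilizer_quotient]
  · show (1:G) * b * 1⁻¹ * (g * a * g⁻¹) = b * (g * a * g⁻¹)
    group

noncomputable def dosetReps [Fintype G] (A B : Subgroup G) : Finset G :=
  Set.Finite.toFinset (Set.toFinite {x : G | (DoubleCoset.mk A B x).out = x})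

theorem mem_dosetReps [Fintype G] {A B : Subgroup G} {r : G} :
    r ∈ dosetReps A B ↔ (DoubleCoset.mk A B r).out = r := by
  rw [dosetReps, Set.Finite.mem_toFinset, Set.mem_setOf_eq]

theorem dosetReps_spec [Fintype G] (A B : Subgroup G) :
    ∀ x : G, ∃! r, r ∈ dosetReps A B ∧ x ∈ DoubleCoset.doubleCoset r (A : Set G) (B : Set G) := by
  intro x
  refine ⟨(DoubleCoset.mk A B x).out, ⟨mem_dosetReps.mpr (by rw [DoubleCoset.out_eq']), ?_⟩, ?_⟩
  · have h1 : DoubleCoset.mk A B ((DoubleCoset.mk A B x).out) = DoubleCoset.mk A B x := DoubleCoset.out_eq' A B _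
    obtain ⟨h, hh, kk, hkk, he⟩ := (DoubleCoset.eq A B _ _).mp h1
    exact DoubleCoset.mem_doubleCoset.mpr ⟨h, hh, kk, hkk, he⟩
  · rintro r ⟨hrR, hrd⟩
    have h2 : DoubleCoset.mk A B r = DoubleCoset.mk A B x := by
      obtain ⟨h, hh, kk, hkk, he⟩ := DoubleCoset.mem_doubleCoset.mp hrd
      exact (DoubleCoset.eq A B _ _).mpr ⟨h, hh, kk, hkk, he⟩
    rw [← mem_dosetReps.mp hrR, h2]

end Master


section Mul

variable (k)

theorem conjRel_refl (p : CPair G) : conjRel p p := by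
  refine ⟨1, ?_, by group⟩
  ext s
  simp [Subgroup.mem_map, MulAut.conj]

variable [Finite G]

noncomputable def PhiPair (K H : Subgroup G) (b a : G)
    (hb : b ∈ Subgroup.centralizer (K : Set G))
    (ha : a ∈ Subgroup.centralizer (H : Set G)) : XB k G :=
  Phi k (wprod_weight (cw_weight K b hb) (cw_weight H a ha))

theorem PhiPair_congr_left (K K' H : Subgroup G) (b b' a x : G)
    (hK : K.map (MulAut.conj x).toMonoidHom = K') (hbx : x * b * x⁻¹ = b')
    (hb : b ∈ Subgroup.centralizer (K : Set G))
    (hb' : b' ∈ Subgroup.centralizer (K' : Set G))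
    (ha : a ∈ Subgroup.centralizer (H : Set G)) :
    PhiPair k K H b a hb ha = PhiPair k K' H b' a hb' ha := by
  subst hK; subst hbx
  have he : ∀ (g : G) (p : (G ⧸ K) × (G ⧸ H)),
      (Equiv.prodCongr (shiftEquiv K x) (Equiv.refl (G ⧸ H))) (g • p) =
        g • (Equiv.prodCongr (shiftEquiv K x) (Equiv.refl (G ⧸ H))) p := by
    rintro g ⟨p1, p2⟩
    show (shiftEquiv K x (g • p1), g • p2) = (g • shiftEquiv K x p1, g • p2)
    rw [shiftEquiv_smul]
  refine Phi_congr k _ _ (Equiv.prodCongr (shiftEquiv K x) (Equiv.refl _)) he ?_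
  rintro ⟨p1, p2⟩
  refine pt_congr_eq _ _ (stabilizer_equiv_eq _ he _) ?_
  show cw _ (x * b * x⁻¹) hb' (shiftEquiv K x p1) * cw H a ha p2 = cw K b hb p1 * cw H a ha p2
  rw [cw_shift K b x hb hb']

theorem PhiPair_congr_right (K H H' : Subgroup G) (b a a' x : G)
    (hH : H.map (MulAut.conj x).toMonoidHom = H') (hax : x * a * x⁻¹ = a')
    (hb : b ∈ Subgroup.centralizer (K : Set G))
    (ha : a ∈ Subgroup.centralizer (H : Set G))
    (ha' : a' ∈ Subgroup.centralizer (H' : Set G)) :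
    PhiPair k K H b a hb ha = PhiPair k K H' b a' hb ha' := by
  subst hH; subst hax
  have he : ∀ (g : G) (p : (G ⧸ K) × (G ⧸ H)),
      (Equiv.prodCongr (Equiv.refl (G ⧸ K)) (shiftEquiv H x)) (g • p) =
        g • (Equiv.prodCongr (Equiv.refl (G ⧸ K)) (shiftEquiv H x)) p := by
    rintro g ⟨p1, p2⟩
    show (g • p1, shiftEquiv H x (g • p2)) = (g • p1, g • shiftEquiv H x p2)
    rw [shiftEquiv_smul]
  refine Phi_congr k _ _ (Equiv.prodCongr (Equiv.refl _) (shiftEquiv H x)) he ?_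
  rintro ⟨p1, p2⟩
  refine pt_congr_eq _ _ (stabilizer_equiv_eq _ he _) ?_
  show cw K b hb p1 * cw _ (x * a * x⁻¹) ha' (shiftEquiv H x p2) = cw K b hb p1 * cw H a ha p2
  rw [cw_shift H a x ha ha']

theorem PhiPairC_congr {p p' q q' : CPair G} (h1 : conjRel p p') (h2 : conjRel q q') :
    PhiPair k p.1.1 q.1.1 p.1.2 q.1.2 p.2 q.2 =
      PhiPair k p'.1.1 q'.1.1 p'.1.2 q'.1.2 p'.2 q'.2 := by
  obtain ⟨x, hx1, hx2⟩ := h1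
  obtain ⟨y, hy1, hy2⟩ := h2
  exact (PhiPair_congr_left k p.1.1 p'.1.1 q.1.1 p.1.2 p'.1.2 q.1.2 x hx1 hx2
    p.2 p'.2 q.2).trans
    (PhiPair_congr_right k p'.1.1 q.1.1 q'.1.1 p'.1.2 q.1.2 q'.1.2 y hy1 hy2 p'.2 q.2 q'.2)

noncomputable def Bmap : Quot (conjRel (G := G)) → Quot (conjRel (G := G)) → XB k G :=
  Quot.lift
    (fun p => Quot.lift (fun q => PhiPair k p.1.1 q.1.1 p.1.2 q.1.2 p.2 q.2)
      (fun _ _ h => PhiPairC_congr k (conjRel_refl p) h))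
    (fun p p' h => funext fun q =>
      Quot.inductionOn q fun q0 => PhiPairC_congr k h (conjRel_refl q0))

noncomputable def mulMap : XB k G →ₗ[k] XB k G →ₗ[k] XB k G :=
  Finsupp.lsum k fun p => LinearMap.toSpanSingleton k (XB k G →ₗ[k] XB k G)
    (Finsupp.lsum k fun q => LinearMap.toSpanSingleton k (XB k G) (Bmap k p q))

theorem mulMap_single_single (p q : Quot (conjRel (G := G))) (c d : k) :
    mulMap k (Finsupp.single p c) (Finsupp.single q d) = (c * d) • Bmap k p q := by
  simp [mulMap, Finsupp.lsum_single, LinearMap.toSpanSingleton_apply, smul_smul]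

theorem mulMap_isXBMul : IsXBMul (k := k) (G := G) (mulMap k) := by
  intro K H b a hb ha R hR
  have h1 : mulMap k (basisElt k K b hb) (basisElt k H a ha) =
      ((1 : k) * 1) • Bmap k (Quot.mk _ ⟨(K, b), hb⟩) (Quot.mk _ ⟨(H, a), ha⟩) :=
    mulMap_single_single k _ _ 1 1
  rw [h1, one_mul, one_smul]
  have h2 : Bmap k (Quot.mk _ ⟨(K, b), hb⟩) (Quot.mk _ ⟨(H, a), ha⟩) =
      PhiPair k K H b a hb ha := rfl
  rw [h2, PhiPair, PhiPair_eq_sum k K H b a hb ha R hR]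

end Mul


section Part2

variable (k)

theorem single_smul_one (q : Quot (conjRel (G := G))) (c : k) :
    Finsupp.single q c = c • Finsupp.single q (1 : k) := by
  rw [Finsupp.smul_single', mul_one]

theorem Phi_coset_eq_basis [Finite G] (H : Subgroup G) (a : G)
    (ha : a ∈ Subgroup.centralizer (H : Set G)) :
    Phi k (cw_weight H a ha) = basisElt k H a ha := by
  rw [Phi_eq_sum k (cw_weight H a ha) ({0} : Finset (Fin 1)) (fun _ => ((1:G) : G ⧸ H)) ?_]
  · rw [Finset.sum_singleton]
    have h1 : pt (cw_weight H a ha) ((1:G) : G ⧸ H) =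
        Quot.mk (conjRel (G := G)) ⟨(H, a), ha⟩ := by
      refine congrArg (Quot.mk _) (Subtype.ext (Prod.ext ?_ ?_))
      · show stabilizer G ((1:G) : G ⧸ H) = H
        exact MulAction.stabilizer_quotient H
      · show (1:G) * a * 1⁻¹ = a
        group
    show Finsupp.single (pt (cw_weight H a ha) ((1:G) : G ⧸ H)) 1 = basisElt k H a ha
    rw [h1]; rfl
  · intro p
    induction p using Quotient.inductionOn' with
    | h z =>
      refine ⟨0, ⟨Finset.mem_singleton_self 0, MulAction.mem_orbit_iff.mpr ⟨z, ?_⟩⟩,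
        fun u _ => Subsingleton.elim u 0⟩
      show (Quotient.mk'' (z * 1) : G ⧸ H) = Quotient.mk'' z
      exact congrArg _ (mul_one z)

theorem PhiPair_comm [Finite G] (K H : Subgroup G) (b a : G)
    (hb : b ∈ Subgroup.centralizer (K : Set G))
    (ha : a ∈ Subgroup.centralizer (H : Set G)) :
    PhiPair k K H b a hb ha = PhiPair k H K a b ha hb := by
  have he : ∀ (g : G) (p : (G ⧸ K) × (G ⧸ H)),
      (Equiv.prodComm (G ⧸ K) (G ⧸ H)) (g • p) =
        g • (Equiv.prodComm (G ⧸ K) (G ⧸ H)) p := by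
    rintro g ⟨p1, p2⟩; rfl
  refine Phi_congr k _ _ (Equiv.prodComm _ _) he ?_
  rintro ⟨p1, p2⟩
  refine pt_congr_conj _ _ ((cw K b hb p1)⁻¹) (stabilizer_equiv_eq _ he _) ?_ ?_
  · refine Subgroup.inv_mem _ ?_
    have h1 : cw K b hb p1 ∈
        Subgroup.centralizer ((stabilizer G p1 : Subgroup G) : Set G) :=
      weight_mem_centralizer (cw_weight K b hb) p1
    refine Subgroup.centralizer_le ?_ h1
    intro u hu
    have hu2 : u ∈ stabilizer G p1 ⊓ stabilizer G p2 := by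
      rw [← stabilizer_prod]; exact hu
    exact (Subgroup.mem_inf.mp hu2).1
  · show (cw K b hb p1)⁻¹ * (cw K b hb p1 * cw H a ha p2) * ((cw K b hb p1)⁻¹)⁻¹ =
      cw H a ha p2 * cw K b hb p1
    group

theorem Phi_assoc_swap [Finite G] (K H L : Subgroup G) (b a c : G)
    (hb : b ∈ Subgroup.centralizer (K : Set G))
    (ha : a ∈ Subgroup.centralizer (H : Set G))
    (hc : c ∈ Subgroup.centralizer (L : Set G)) :
    Phi k (wprod_weight (wprod_weight (cw_weight K b hb) (cw_weight H a ha)) (cw_weight L c hc)) =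
    Phi k (wprod_weight (wprod_weight (cw_weight H a ha) (cw_weight L c hc)) (cw_weight K b hb)) := by
  let e : (((G ⧸ K) × (G ⧸ H)) × (G ⧸ L)) ≃ (((G ⧸ H) × (G ⧸ L)) × (G ⧸ K)) :=
    { toFun := fun p => ((p.1.2, p.2), p.1.1)
      invFun := fun p => ((p.2, p.1.1), p.1.2)
      left_inv := fun p => rfl
      right_inv := fun p => rfl }
  have he : ∀ (g : G) p, e (g • p) = g • e p := by rintro g ⟨⟨p1, p2⟩, p3⟩; rfl
  refine Phi_congr k _ _ e he ?_
  rintro ⟨⟨p1, p2⟩, p3⟩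
  refine pt_congr_conj _ _ ((cw K b hb p1)⁻¹) (stabilizer_equiv_eq _ he _) ?_ ?_
  · refine Subgroup.inv_mem _ ?_
    have h1 : cw K b hb p1 ∈
        Subgroup.centralizer ((stabilizer G p1 : Subgroup G) : Set G) :=
      weight_mem_centralizer (cw_weight K b hb) p1
    refine Subgroup.centralizer_le ?_ h1
    intro u hu
    have hu2 : u ∈ (stabilizer G ((p1, p2) : (G ⧸ K) × (G ⧸ H))) ⊓ stabilizer G p3 := by
      rw [← stabilizer_prod]; exact hu
    have hu3 : u ∈ stabilizer G p1 ⊓ stabilizer G p2 := by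
      rw [← stabilizer_prod]; exact (Subgroup.mem_inf.mp hu2).1
    exact (Subgroup.mem_inf.mp hu3).1
  · show (cw K b hb p1)⁻¹ * ((cw K b hb p1 * cw H a ha p2) * cw L c hc p3) *
      ((cw K b hb p1)⁻¹)⁻¹ = (cw H a ha p2 * cw L c hc p3) * cw K b hb p1
    group

theorem Phi_top_unit [Finite G] (H : Subgroup G) (a : G)
    (ha : a ∈ Subgroup.centralizer (H : Set G))
    (h1 : (1:G) ∈ Subgroup.centralizer (((⊤ : Subgroup G) : Subgroup G) : Set G)) :
    PhiPair k ⊤ H 1 a h1 ha = basisElt k H a ha := by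
  haveI : Subsingleton (G ⧸ (⊤ : Subgroup G)) := QuotientGroup.subsingleton_quotient_top
  let e : ((G ⧸ (⊤ : Subgroup G)) × (G ⧸ H)) ≃ (G ⧸ H) :=
    { toFun := Prod.snd
      invFun := fun q => (((1:G) : G ⧸ (⊤ : Subgroup G)), q)
      left_inv := fun p => Prod.ext (Subsingleton.elim _ _) rfl
      right_inv := fun q => rfl }
  have he : ∀ (g : G) p, e (g • p) = g • e p := by rintro g ⟨p1, p2⟩; rfl
  have h2 : Phi k (wprod_weight (cw_weight ⊤ 1 h1) (cw_weight H a ha)) =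
      Phi k (cw_weight H a ha) := by
    refine Phi_congr k _ _ e he ?_
    rintro ⟨p1, p2⟩
    refine pt_congr_eq _ _ (stabilizer_equiv_eq _ he _) ?_
    show cw H a ha p2 = cw ⊤ 1 h1 p1 * cw H a ha p2
    have h3 : cw ⊤ (1:G) h1 p1 = 1 := by
      induction p1 using Quotient.inductionOn' with
      | h g => show g * 1 * g⁻¹ = 1; group
    rw [h3, one_mul]
  rw [PhiPair, h2, Phi_coset_eq_basis]

variable [Fintype G]
variable (mul : XB k G →ₗ[k] XB k G →ₗ[k] XB k G)

theorem mul_basis_basis (hmul : IsXBMul mul) (K H : Subgroup G) (b a : G)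
    (hb : b ∈ Subgroup.centralizer (K : Set G))
    (ha : a ∈ Subgroup.centralizer (H : Set G)) :
    mul (basisElt k K b hb) (basisElt k H a ha) = PhiPair k K H b a hb ha := by
  rw [hmul K H b a hb ha (dosetReps K H) (dosetReps_spec K H), PhiPair,
    PhiPair_eq_sum k K H b a hb ha (dosetReps K H) (dosetReps_spec K H)]

theorem mul_Phi_basis (hmul : IsXBMul mul) (X : Type) [MulAction G X] [Finite X] {w : X → G} (hw : IsWeight X w)
    (L : Subgroup G) (c : G) (hc : c ∈ Subgroup.centralizer (L : Set G)) :
    mul (Phi k hw) (basisElt k L c hc) =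
      Phi k (wprod_weight hw (cw_weight L c hc)) := by
  have hterm : ∀ o : Quotient (MulAction.orbitRel G X),
      mul (Finsupp.single (Quotient.liftOn' o (pt hw) (pt_orbitRel hw)) (1:k))
          (basisElt k L c hc) =
      ∑ g ∈ dosetReps (stabilizer G o.out) L,
        basisElt k (stabilizer G o.out ⊓ L.map (MulAut.conj g).toMonoidHom)
          (w o.out * (g * c * g⁻¹))
          (centralizer_aux (weight_mem_centralizer hw o.out) hc) := by
    intro o
    have ho : Quotient.liftOn' o (pt hw) (pt_orbitRel hw) = pt hw o.out := by
      conv_lhs => rw [← Quotient.out_eq' o]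
      rw [Quotient.liftOn'_mk'']
    rw [ho]
    have hb : Finsupp.single (pt hw o.out) (1:k) =
        basisElt k (stabilizer G o.out) (w o.out) (weight_mem_centralizer hw o.out) := rfl
    rw [hb, hmul _ _ _ _ _ _ (dosetReps _ L) (dosetReps_spec _ L)]
  have hL : mul (Phi k hw) (basisElt k L c hc) =
      ∑ o : Quotient (MulAction.orbitRel G X),
        mul (Finsupp.single (Quotient.liftOn' o (pt hw) (pt_orbitRel hw)) (1:k))
          (basisElt k L c hc) := by
    rw [Phi, map_sum, LinearMap.coe_sum, Finset.sum_apply]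
  rw [hL, Finset.sum_congr rfl fun o _ => hterm o]
  rw [Phi_prod_coset_eq_sum k hw L c hc
    ((Finset.univ : Finset (Quotient (MulAction.orbitRel G X))).sigma
      (fun o => dosetReps (stabilizer G o.out) L))
    (fun i => i.1.out) (fun i => i.2) ?_]
  · rw [Finset.sum_sigma]
  · intro p
    obtain ⟨x, q⟩ := p
    induction q using Quotient.inductionOn' with
    | h z =>
      set o : Quotient (MulAction.orbitRel G X) := Quotient.mk'' x with ho
      have hx0 : x ∈ orbit G o.out := by
        have h4 : Quotient.mk'' o.out = Quotient.mk'' x := Quotient.out_eq' o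
        exact Quotient.eq''.mp h4.symm
      obtain ⟨z₀, hz₀⟩ := MulAction.mem_orbit_iff.mp hx0
      have key : ∀ g : G,
          ((x, Quotient.mk'' z) : X × G ⧸ L) ∈
            orbit G ((o.out, (g : G ⧸ L)) : X × G ⧸ L) ↔
          z₀⁻¹ * z ∈ DoubleCoset.doubleCoset g ((stabilizer G o.out : Subgroup G) : Set G) (L : Set G) := by
        intro g
        constructor
        · intro horb
          obtain ⟨u, hu⟩ := MulAction.mem_orbit_iff.mp horb
          have h1 : u • o.out = x := congrArg Prod.fst hu
          have h2 : (↑(u * g) : G ⧸ L) = Quotient.mk'' z := congrArg Prod.snd hu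
          have hs : z₀⁻¹ * u ∈ stabilizer G o.out := by
            rw [mem_stabilizer_iff, mul_smul, h1, ← hz₀, inv_smul_smul]
          have hl : (u * g)⁻¹ * z ∈ L := QuotientGroup.eq.mp h2
          exact DoubleCoset.mem_doubleCoset.mpr ⟨z₀⁻¹ * u, hs, (u * g)⁻¹ * z, hl, by group⟩
        · intro hd
          obtain ⟨s, hs, l, hl, heq⟩ := DoubleCoset.mem_doubleCoset.mp hd
          refine MulAction.mem_orbit_iff.mpr ⟨z₀ * s, ?_⟩
          have e1 : (z₀ * s) • o.out = x := by
            rw [mul_smul, mem_stabilizer_iff.mp hs, hz₀]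
          have e2 : (↑((z₀ * s) * g) : G ⧸ L) = Quotient.mk'' z := by
            refine QuotientGroup.eq.mpr ?_
            have h7 : ((z₀ * s) * g)⁻¹ * z = l := by
              have h8 : ((z₀ * s) * g)⁻¹ * z = g⁻¹ * s⁻¹ * (z₀⁻¹ * z) := by group
              rw [h8, heq]; group
            rw [h7]; exact hl
          exact Prod.ext e1 e2
      have forced : ∀ (o' : Quotient (MulAction.orbitRel G X)) (g : G),
          ((x, Quotient.mk'' z) : X × G ⧸ L) ∈
            orbit G ((o'.out, (g : G ⧸ L)) : X × G ⧸ L) → o' = o := by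
        intro o' g horb
        obtain ⟨u, hu⟩ := MulAction.mem_orbit_iff.mp horb
        have h1 : u • o'.out = x := congrArg Prod.fst hu
        have h5 : Quotient.mk'' x = Quotient.mk'' (Quotient.out o') :=
          Quotient.sound'
            (show (MulAction.orbitRel G X).r x (Quotient.out o') from
              MulAction.mem_orbit_iff.mpr ⟨u, h1⟩)
        calc o' = Quotient.mk'' (Quotient.out o') := (Quotient.out_eq' o').symm
        _ = Quotient.mk'' x := h5.symm
        _ = o := ho.symm
      obtain ⟨r, ⟨hr1, hr2⟩, hr3⟩ := dosetReps_spec (stabilizer G o.out) L (z₀⁻¹ * z)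
      refine ⟨⟨o, r⟩, ⟨Finset.mem_sigma.mpr ⟨Finset.mem_univ _, hr1⟩, (key r).mpr hr2⟩, ?_⟩
      rintro ⟨o', g⟩ ⟨hmem, horb⟩
      have ho' : o' = o := forced o' g horb
      subst ho'
      have h9 : g = r := hr3 g ⟨(Finset.mem_sigma.mp hmem).2, (key g).mp horb⟩
      exact congrArg (Sigma.mk o) h9

theorem mul_comm_xb (hmul : IsXBMul mul) : ∀ x y : XB k G, mul x y = mul y x := by
  intro x y
  induction x using Finsupp.induction_linear with
  | zero => simp
  | add f g hf hg => simp only [map_add, LinearMap.add_apply, hf, hg]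
  | single p c =>
    induction y using Finsupp.induction_linear with
    | zero => simp
    | add f g hf hg => simp only [map_add, LinearMap.add_apply, hf, hg]
    | single q d =>
      obtain ⟨p0, rfl⟩ := Quot.exists_rep p
      obtain ⟨q0, rfl⟩ := Quot.exists_rep q
      obtain ⟨⟨Kp, bp⟩, hbp⟩ := p0
      obtain ⟨⟨Hq, aq⟩, haq⟩ := q0
      rw [single_smul_one k _ c, single_smul_one k _ d]
      simp only [map_smul, LinearMap.smul_apply]
      rw [smul_comm]
      congr 1
      congr 1
      show mul (basisElt k Kp bp hbp) (basisElt k Hq aq haq) =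
        mul (basisElt k Hq aq haq) (basisElt k Kp bp hbp)
      rw [mul_basis_basis k mul hmul, mul_basis_basis k mul hmul, PhiPair_comm]

theorem mul_assoc_xb (hmul : IsXBMul mul) : ∀ x y z : XB k G, mul (mul x y) z = mul x (mul y z) := by
  have key : ∀ (p q r : CPair G),
      mul (mul (basisElt k p.1.1 p.1.2 p.2) (basisElt k q.1.1 q.1.2 q.2))
          (basisElt k r.1.1 r.1.2 r.2) =
      mul (basisElt k p.1.1 p.1.2 p.2)
          (mul (basisElt k q.1.1 q.1.2 q.2) (basisElt k r.1.1 r.1.2 r.2)) := by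
    rintro ⟨⟨K, b⟩, hb⟩ ⟨⟨H, a⟩, ha⟩ ⟨⟨L, c⟩, hc⟩
    show mul (mul (basisElt k K b hb) (basisElt k H a ha)) (basisElt k L c hc) =
      mul (basisElt k K b hb) (mul (basisElt k H a ha) (basisElt k L c hc))
    rw [mul_basis_basis k mul hmul K H b a hb ha, PhiPair,
      mul_Phi_basis k mul hmul _ _ L c hc,
      mul_basis_basis k mul hmul H L a c ha hc,
      mul_comm_xb k mul hmul (basisElt k K b hb) (PhiPair k H L a c ha hc), PhiPair,
      mul_Phi_basis k mul hmul _ _ K b hb]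
    exact Phi_assoc_swap k K H L b a c hb ha hc
  intro x y z
  induction x using Finsupp.induction_linear with
  | zero => simp
  | add f g hf hg => simp only [map_add, LinearMap.add_apply, hf, hg]
  | single p cp =>
    induction y using Finsupp.induction_linear with
    | zero => simp
    | add f g hf hg => simp only [map_add, LinearMap.add_apply, hf, hg]
    | single q cq =>
      induction z using Finsupp.induction_linear with
      | zero => simp
      | add f g hf hg => simp only [map_add, LinearMap.add_apply, hf, hg]
      | single r cr =>
        obtain ⟨p0, rfl⟩ := Quot.exists_rep p
        obtain ⟨q0, rfl⟩ := Quot.exists_rep q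
        obtain ⟨r0, rfl⟩ := Quot.exists_rep r
        rw [single_smul_one k _ cp, single_smul_one k _ cq, single_smul_one k _ cr]
        simp only [map_smul, LinearMap.smul_apply]
        congr 1
        congr 1
        congr 1
        exact key p0 q0 r0

theorem mul_one_left (hmul : IsXBMul mul) :
    ∀ x : XB k G, mul (basisElt k ⊤ 1 one_mem_centralizer_top) x = x := by
  intro x
  induction x using Finsupp.induction_linear with
  | zero => simp
  | add f g hf hg => simp only [map_add, hf, hg]
  | single q c =>
    obtain ⟨q0, rfl⟩ := Quot.exists_rep q
    obtain ⟨⟨Hq, aq⟩, haq⟩ := q0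
    rw [single_smul_one k _ c, map_smul]
    rw [show (Finsupp.single (Quot.mk (conjRel (G := G)) ⟨(Hq, aq), haq⟩) (1:k)) =
      basisElt k Hq aq haq from rfl]
    rw [mul_basis_basis k mul hmul, Phi_top_unit]

end Part2

/-- The crossed Burnside algebra `xB_k(G)` — the free `k`-module on
`G`-conjugacy classes of pairs `(H, a)` with `H ≤ G` and `a ∈ C_G(H)`, with
multiplication `(K, b)·(H, a) = Σ_{[g] ∈ K\G/H} (K ∩ gHg⁻¹, b·gag⁻¹)` — is a
well-defined associative, commutative, unital `k`-algebra with unit the class of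
`(G, e)`.  Well-definedness is expressed by the existence of a `k`-bilinear
multiplication satisfying the formula for every choice of pair representatives and
of double coset representatives. -/
theorem statement7 (k G : Type) [CommRing k] [Group G] [Fintype G] :
    (∃ mul : XB k G →ₗ[k] XB k G →ₗ[k] XB k G, IsXBMul mul) ∧
    ∀ mul : XB k G →ₗ[k] XB k G →ₗ[k] XB k G, IsXBMul mul →
      (∀ x y z : XB k G, mul (mul x y) z = mul x (mul y z)) ∧
      (∀ x y : XB k G, mul x y = mul y x) ∧
      (∀ x : XB k G,
        mul (basisElt k ⊤ 1 one_mem_centralizer_top) x = x ∧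
        mul x (basisElt k ⊤ 1 one_mem_centralizer_top) = x) := by
  constructor
  · exact ⟨mulMap k, mulMap_isXBMul k⟩
  · intro mul hmul
    refine ⟨mul_assoc_xb k mul hmul, mul_comm_xb k mul hmul,
      fun x => ⟨mul_one_left k mul hmul x, ?_⟩⟩
    rw [mul_comm_xb k mul hmul]
    exact mul_one_left k mul hmul x


end CrossedBurnside
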